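/- Let X be an integrable real-valued random variable on a probability space (Ω, F, P) and β ∈ (0,1), and suppose P(X ≥ VaR_β(X)) = β. Then CVaR_β(X) = (1/β)·E[X·1_{X ≥ VaR_β(X)}]; that is, CVaR_β(X) equals the expectation of X conditioned on the event X ≥ VaR_β(X). -/

import Mathlib

open MeasureTheory

/-- Value-at-Risk at level `β`: `VaR_β(X) := inf {z : P(X ≤ z) ≥ 1 - β}`. -/
noncomputable def VaR {Ω : Type*} [MeasurableSpace Ω] (P : Measure Ω) (β : ℝ) (X : Ω → ℝ) : ℝ :=
  sInf {z : ℝ | ENNReal.ofReal (1 - β) ≤ P {ω | X ω ≤ z}}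

/-- Conditional Value-at-Risk at level `β`: `CVaR_β(X) := inf_z E[z + (X - z)⁺ / β]`. -/
noncomputable def CVaR {Ω : Type*} [MeasurableSpace Ω] (P : Measure Ω) (β : ℝ) (X : Ω → ℝ) : ℝ :=
  ⨅ z : ℝ, (z + (∫ ω, max (X ω - z) 0 ∂P) / β)

/-- If `P(X ≥ VaR_β(X)) = β`, then `CVaR_β(X) = (1/β) E[X · 1_{X ≥ VaR_β(X)}]`. -/
theorem stmt_8 {Ω : Type*} [MeasurableSpace Ω] (P : Measure Ω) [IsProbabilityMeasure P]
    (X : Ω → ℝ) (hX : Measurable X) (hint : Integrable X P)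
    {β : ℝ} (hβ : β ∈ Set.Ioo (0 : ℝ) 1)
    (hP : P {ω | VaR P β X ≤ X ω} = ENNReal.ofReal β) :
    CVaR P β X = (1 / β) * ∫ ω in {ω | VaR P β X ≤ X ω}, X ω ∂P := by
  obtain ⟨hβ0, hβ1⟩ := hβ
  set v := VaR P β X with hv
  set S : Set Ω := {ω | v ≤ X ω} with hSdef
  have hS : MeasurableSet S := by
    have : S = X ⁻¹' Set.Ici v := rfl
    rw [this]; exact hX measurableSet_Ici
  have hPS : (P S).toReal = β := by rw [hP]; exact ENNReal.toReal_ofReal hβ0.le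
  -- integrability helpers
  have hintmax : ∀ z : ℝ, Integrable (fun ω => max (X ω - z) 0) P := fun z =>
    (hint.sub (integrable_const z)).pos_part
  have hindint : ∀ c : ℝ, Integrable (S.indicator fun _ => c) P := fun c =>
    (integrable_const c).indicator hS
  have hindval : ∀ c : ℝ, (∫ ω, S.indicator (fun _ => c) ω ∂P) = c * β := by
    intro c
    rw [integral_indicator hS, setIntegral_const, show P.real S = β from hPS, smul_eq_mul, mul_comm]
  -- value at v
  have hIv : (∫ ω, max (X ω - v) 0 ∂P) = (∫ ω in S, X ω ∂P) - v * β := by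
    have heq : (fun ω => max (X ω - v) 0) = S.indicator (fun ω => X ω - v) := by
      funext ω
      by_cases h : v ≤ X ω
      · rw [Set.indicator_of_mem (show ω ∈ S from h), max_eq_left (by linarith)]
      · rw [Set.indicator_of_notMem (show ω ∉ S from h),
          max_eq_right (by push_neg at h; linarith)]
    rw [heq, integral_indicator hS,
      integral_sub hint.integrableOn (integrableOn_const (measure_lt_top P S).ne),
      setIntegral_const, show P.real S = β from hPS, smul_eq_mul, mul_comm]
  -- key inequality: for every z, the objective at z is ≥ the objective at v
  have key : ∀ z : ℝ, (1 / β) * ∫ ω in S, X ω ∂P ≤ z + (∫ ω, max (X ω - z) 0 ∂P) / β := by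
    intro z
    have hpt : ∀ ω, S.indicator (fun _ => v - z) ω + max (X ω - v) 0 ≤ max (X ω - z) 0 := by
      intro ω
      by_cases h : v ≤ X ω
      · rw [Set.indicator_of_mem (show ω ∈ S from h), max_eq_left (by linarith)]
        have := le_max_left (X ω - z) 0
        linarith
      · push_neg at h
        rw [Set.indicator_of_notMem (show ω ∉ S from not_le.2 h),
          max_eq_right (by linarith)]
        have := le_max_right (X ω - z) 0
        linarith
    have hint1 : Integrable (fun ω => S.indicator (fun _ => v - z) ω + max (X ω - v) 0) P :=
      (hindint _).add (hintmax v)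
    have hmono := integral_mono hint1 (hintmax z) hpt
    rw [integral_add (hindint _) (hintmax v), hindval] at hmono
    rw [hIv] at hmono
    set A := ∫ ω in S, X ω ∂P with hA
    set B := ∫ ω, max (X ω - z) 0 ∂P with hB
    have hβ0' : (0:ℝ) < β := hβ0
    have h2 : 1 / β * A = v + (A - v * β) / β := by field_simp; ring
    have h3 : v + (B - (v - z) * β) / β = z + B / β := by field_simp; ring
    have hstep : (A - v * β) / β ≤ (B - (v - z) * β) / β :=
      (div_le_div_iff_of_pos_right hβ0').2 (by linarith)
    linarith
  -- conclude
  have hbdd : BddBelow (Set.range fun z : ℝ => z + (∫ ω, max (X ω - z) 0 ∂P) / β) := by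
    refine ⟨(1 / β) * ∫ ω in S, X ω ∂P, ?_⟩
    rintro x ⟨z, rfl⟩
    exact key z
  apply le_antisymm
  · have h1 : CVaR P β X ≤ v + (∫ ω, max (X ω - v) 0 ∂P) / β := ciInf_le hbdd v
    have h2 : v + (∫ ω, max (X ω - v) 0 ∂P) / β = (1 / β) * ∫ ω in S, X ω ∂P := by
      rw [hIv]; field_simp; ring
    rw [h2] at h1
    exact h1
  · exact le_ciInf key
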